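/- arXiv:1810.11216 — 3 statements merged into one kernel-verified Lean document; each statement's English description precedes it below -/
import Mathlib

section
/- For any real ε with 2/n < ε ≤ 1 and integer n ≥ 2, the quantity n·Σ_{i=1}^{⌈n(1−ε)⌉} 1/(n−i) − ⌈n(1−ε)⌉ is strictly less than n·ln(2/ε). -/
/-- `1/k ≤ log k - log (k-1)` for real `k ≥ 2`. -/
lemma aux_log_step (k : ℝ) (hk : 2 ≤ k) :
    1 / k ≤ Real.log k - Real.log (k - 1) := by
  have h0 : 0 < k := by linarith
  have h1 : 0 < k - 1 := by linarith
  have h := Real.log_le_sub_one_of_pos (show 0 < (k - 1) / k by positivity)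
  rw [Real.log_div (by linarith) (by linarith)] at h
  have heq : (k - 1) / k - 1 = -(1 / k) := by field_simp; ring
  linarith

/-- Partial-sum bound: `Σ_{i=1}^{m} 1/(n-i) < 1/(n-m) + log n - log (n-m)`. -/
lemma aux_sum_bound (n : ℕ) (hn : 2 ≤ n) :
    ∀ m : ℕ, 1 ≤ m → m + 1 ≤ n →
      ∑ i ∈ Finset.Icc 1 m, 1 / ((n : ℝ) - i)
        < 1 / ((n : ℝ) - m) + Real.log n - Real.log ((n : ℝ) - m) := by
  intro m
  induction m with
  | zero => intro h; omega
  | succ m ih =>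
    intro _ hmn
    rcases Nat.eq_zero_or_pos m with hm0 | hm1
    · subst hm0
      simp only [Finset.Icc_self, Finset.sum_singleton]
      have hn1 : (1 : ℝ) ≤ (n : ℝ) - 1 := by
        have : (2 : ℝ) ≤ (n : ℝ) := by exact_mod_cast hn
        push_cast
        linarith
      have hlt : Real.log ((n : ℝ) - 1) < Real.log n := by
        apply Real.log_lt_log (by linarith)
        linarith
      push_cast
      linarith
    · have hmn' : m + 1 ≤ n := by omega
      have ihv := ih hm1 hmn'
      rw [Finset.sum_Icc_succ_top (by omega : 1 ≤ m + 1)]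
      have hk : (2 : ℝ) ≤ (n : ℝ) - m := by
        have : (m : ℝ) + 2 ≤ (n : ℝ) := by exact_mod_cast (by omega : m + 2 ≤ n)
        linarith
      have hstep := aux_log_step ((n : ℝ) - m) hk
      have hcast : (n : ℝ) - (↑(m + 1) : ℝ) = (n : ℝ) - m - 1 := by push_cast; ring
      rw [hcast]
      linarith

/-- For `2/n < ε ≤ 1` and `n ≥ 2`, the quantity
`n·Σ_{i=1}^{⌈n(1−ε)⌉} 1/(n−i) − ⌈n(1−ε)⌉` is strictly less than `n·ln(2/ε)`. -/
theorem stmt8 (n : ℕ) (hn : 2 ≤ n) (ε : ℝ) (hε1 : 2 / n < ε) (hε2 : ε ≤ 1) :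
    (n : ℝ) * ∑ i ∈ Finset.Icc 1 (⌈(n : ℝ) * (1 - ε)⌉₊), 1 / ((n : ℝ) - i)
        - (⌈(n : ℝ) * (1 - ε)⌉₊ : ℝ)
      < n * Real.log (2 / ε) := by
  have hn0 : (0 : ℝ) < n := by positivity
  have hε0 : 0 < ε := lt_trans (by positivity) hε1
  set m := ⌈(n : ℝ) * (1 - ε)⌉₊ with hm
  set t := (n : ℝ) * ε with htdef
  clear_value t
  have ht2 : 2 < t := by
    rw [div_lt_iff₀ hn0] at hε1
    rw [htdef]; linarith [hε1]
  have htn : t ≤ n := by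
    rw [htdef]; nlinarith
  have hn3 : (3 : ℝ) ≤ (n : ℝ) := by
    have : 2 < (n : ℝ) := lt_of_lt_of_le ht2 htn
    exact_mod_cast (by exact_mod_cast this : 2 < n)
  have hx0 : (0 : ℝ) ≤ (n : ℝ) * (1 - ε) := by nlinarith
  have hmx : (n : ℝ) * (1 - ε) ≤ m := Nat.le_ceil _
  have hmx' : (m : ℝ) < (n : ℝ) * (1 - ε) + 1 := Nat.ceil_lt_add_one hx0
  -- log of 2/ε positive
  have hlog2ε : 0 < Real.log (2 / ε) := by
    apply Real.log_pos
    rw [lt_div_iff₀ hε0]; linarith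
  rcases Nat.eq_zero_or_pos m with hm0 | hm1
  · rw [hm0]
    simp only [Nat.cast_zero, show Finset.Icc 1 0 = (∅ : Finset ℕ) by simp,
      Finset.sum_empty, mul_zero, sub_zero]
    positivity
  · -- main case
    have hs2 : (m : ℝ) + 2 ≤ (n : ℝ) := by
      have h1 : (m : ℝ) < (n : ℝ) - 1 := by
        have : (n : ℝ) * (1 - ε) = (n : ℝ) - t := by rw [htdef]; ring
        rw [this] at hmx'
        linarith
      have h2 : m + 1 < n := by exact_mod_cast (by push_cast; linarith : ((m : ℝ) + 1) < (n : ℝ))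
      exact_mod_cast (by omega : m + 2 ≤ n)
    set s := (n : ℝ) - m with hsdef
    clear_value s
    have hs2' : (2 : ℝ) ≤ s := by rw [hsdef]; linarith
    have hs0 : (0 : ℝ) < s := by linarith
    have hst : s ≤ t := by
      have : (n : ℝ) * (1 - ε) = (n : ℝ) - t := by rw [htdef]; ring
      rw [this] at hmx
      rw [hsdef]; linarith
    have hts : t < s + 1 := by
      have : (n : ℝ) * (1 - ε) = (n : ℝ) - t := by rw [htdef]; ring
      rw [this] at hmx'
      rw [hsdef]; linarith
    have hsn : s ≤ (n : ℝ) := by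
      rw [hsdef]
      have : (0 : ℝ) ≤ (m : ℝ) := by positivity
      linarith
    -- sum bound
    have hsum := aux_sum_bound n hn m hm1 (by
      exact_mod_cast (by push_cast; linarith : ((m : ℝ) + 1) ≤ (n : ℝ)))
    have hmain : (n : ℝ) * ∑ i ∈ Finset.Icc 1 m, 1 / ((n : ℝ) - i) - (m : ℝ)
        < (n : ℝ) * (1 / s + Real.log n - Real.log s) - m := by
      have := mul_lt_mul_of_pos_left hsum hn0
      rw [hsdef]; linarith
    refine lt_of_lt_of_le hmain ?_
    -- remains: n*(1/s + log n - log s) - m ≤ n * log (2/ε)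
    have ht0 : (0 : ℝ) < t := by linarith
    have hlogε : Real.log ε = Real.log t - Real.log n := by
      rw [htdef, Real.log_mul (ne_of_gt hn0) (ne_of_gt hε0)]; ring
    have hlogdiv : Real.log (2 / ε) = Real.log 2 - Real.log ε :=
      Real.log_div two_ne_zero (ne_of_gt hε0)
    -- log t - log s ≤ 1/s
    have hlogts : Real.log t - Real.log s ≤ 1 / s := by
      have h := Real.log_le_sub_one_of_pos (show 0 < t / s by positivity)
      rw [Real.log_div (ne_of_gt ht0) (ne_of_gt hs0)] at h
      have h2 : t / s - 1 ≤ 1 / s := by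
        rw [div_sub' (ne_of_gt hs0), div_le_div_iff₀ hs0 hs0]
        nlinarith
      linarith
    have hA : (n : ℝ) * Real.log t - (n : ℝ) * Real.log s ≤ (n : ℝ) * (1 / s) := by
      have := mul_le_mul_of_nonneg_left hlogts (le_of_lt hn0)
      linarith [this]
    -- 2n/s + s ≤ n + 2
    have hB : 2 * ((n : ℝ) * (1 / s)) ≤ (n : ℝ) + 2 - s := by
      rw [mul_one_div, ← sub_nonneg]
      have key : 0 ≤ ((n : ℝ) + 2 - s) * s - 2 * n := by nlinarith [mul_nonneg (by linarith : (0:ℝ) ≤ s - 2) (by linarith : (0:ℝ) ≤ (n : ℝ) - s)]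
      have : (n : ℝ) + 2 - s - 2 * (n / s) = (((n : ℝ) + 2 - s) * s - 2 * n) / s := by
        field_simp
      rw [this]
      positivity
    have hC : (2 : ℝ) ≤ (n : ℝ) * Real.log 2 := by
      have hl2 : (0.6931471803 : ℝ) < Real.log 2 := Real.log_two_gt_d9
      have h1 : (0 : ℝ) ≤ Real.log 2 := by norm_num at hl2 ⊢; linarith
      have h2 : (3 : ℝ) * Real.log 2 ≤ (n : ℝ) * Real.log 2 :=
        mul_le_mul_of_nonneg_right hn3 h1
      linarith
    have hmeq : (m : ℝ) = (n : ℝ) - s := by rw [hsdef]; ring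
    rw [hlogdiv, hlogε, hmeq]
    have lhs_eq : (n : ℝ) * (1 / s + Real.log n - Real.log s) - ((n : ℝ) - s)
        = (n : ℝ) * (1 / s) + (n : ℝ) * Real.log n - (n : ℝ) * Real.log s + s - n := by ring
    have rhs_eq : (n : ℝ) * (Real.log 2 - (Real.log t - Real.log n))
        = (n : ℝ) * Real.log 2 - (n : ℝ) * Real.log t + (n : ℝ) * Real.log n := by ring
    rw [lhs_eq, rhs_eq]
    linarith [hA, hB, hC]
end

section
/- Let M be a matroid, K a subset of elements with known distinct positive weights, U the remaining elements with unknown weights, and I*_K the maximum-weight independent set within K. Then the set 𝒦 of elements of I*_K that can leave the optimal solution under some assignment of weights to U has cardinality at most min(|U|, |I*_K|). -/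
open Set

/-- Key lemma: if `I` is a maximum-weight independent subset of `G` (weights injective and
positive on `G`), then every element of `G \ I` lies in the closure of the set of elements
of `I` of strictly larger weight. -/
private lemma span_heavier {α : Type*} [Fintype α] (M : Matroid α) (G : Set α) (hG : G ⊆ M.E)
    (w : α → ℝ) (hpos : ∀ x ∈ G, 0 < w x) (hinj : Set.InjOn w G)
    (I : Set α) (hIG : I ⊆ G) (hind : M.Indep I)
    (hmax : ∀ J ⊆ G, M.Indep J → ∑ᶠ x ∈ J, w x ≤ ∑ᶠ x ∈ I, w x)
    (e : α) (he : e ∈ G) (heI : e ∉ I) :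
    e ∈ M.closure {y ∈ I | w e < w y} := by
  by_contra hecl
  set A := {y ∈ I | w e < w y} with hA
  have hAI : A ⊆ I := sep_subset _ _
  have hAind : M.Indep A := hind.subset hAI
  have heA : e ∉ A := fun h => heI (hAI h)
  have hins : M.Indep (insert e A) := by
    rw [hAind.insert_indep_iff_of_notMem heA]
    exact ⟨hG he, hecl⟩
  have hX : insert e I ⊆ M.E := insert_subset (hG he) (hIG.trans hG)
  obtain ⟨I', hI'b, hsub⟩ := hins.subset_isBasis_of_subset
    (insert_subset_insert hAI) hX
  have hI'ind := hI'b.indep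
  have hI'X : I' ⊆ insert e I := hI'b.subset
  have heI' : e ∈ I' := hsub (mem_insert _ _)
  obtain ⟨J', hJ'b, hIJ'⟩ := hind.subset_isBasis_of_subset (subset_insert e I) hX
  have hcard : I.encard ≤ I'.encard := by
    rw [hI'b.encard_eq_encard hJ'b]
    exact Set.encard_mono hIJ'
  -- `I'` is `insert e (I' ∩ I)`
  have hI'eq : I' = insert e (I' ∩ I) := by
    apply Subset.antisymm
    · intro z hz
      rcases hI'X hz with h | h
      · exact h ▸ mem_insert _ _
      · exact mem_insert_of_mem _ ⟨hz, h⟩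
    · exact insert_subset heI' inter_subset_left
  have heII : e ∉ I' ∩ I := fun h => heI h.2
  -- cardinality bookkeeping : `(I \ I').encard ≤ 1`
  have hc1 : (I \ I').encard + (I ∩ I').encard = I.encard := Set.encard_diff_add_encard_inter I I'
  have hc2 : I'.encard = (I' ∩ I).encard + 1 := by
    nth_rewrite 1 [hI'eq]; exact Set.encard_insert_of_notMem heII
  have hfin : (I' ∩ I).encard ≠ ⊤ := (Set.toFinite _).encard_lt_top.ne
  have hDle : (I \ I').encard ≤ 1 := by
    have h1 : (I \ I').encard + (I' ∩ I).encard ≤ 1 + (I' ∩ I).encard := by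
      calc (I \ I').encard + (I' ∩ I).encard = I.encard := by
              rw [Set.inter_comm I' I]; exact hc1
        _ ≤ I'.encard := hcard
        _ = 1 + (I' ∩ I).encard := by rw [hc2, add_comm]
    exact (WithTop.add_le_add_iff_right hfin).mp h1
  -- sum comparison
  have hsumI' : ∑ᶠ x ∈ I', w x = w e + ∑ᶠ x ∈ I' ∩ I, w x := by
    conv_lhs => rw [hI'eq]
    exact finsum_mem_insert w heII (Set.toFinite _)
  have hdisj2 : Disjoint (I ∩ I') (I \ I') := disjoint_sdiff_right.mono_left inter_subset_right
  have hsumI : ∑ᶠ x ∈ I, w x = ∑ᶠ x ∈ I ∩ I', w x + ∑ᶠ x ∈ I \ I', w x := by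
    rw [← finsum_mem_union hdisj2 (Set.toFinite _) (Set.toFinite _), Set.inter_union_diff]
  have hle : ∑ᶠ x ∈ I', w x ≤ ∑ᶠ x ∈ I, w x :=
    hmax I' (hI'X.trans (insert_subset he hIG)) hI'ind
  have hinter : ∑ᶠ x ∈ I' ∩ I, w x = ∑ᶠ x ∈ I ∩ I', w x := by rw [Set.inter_comm]
  -- the removed part `I \ I'` has small weight
  rcases Set.encard_le_one_iff_eq.mp hDle with hD | ⟨z, hD⟩
  · have : ∑ᶠ x ∈ I \ I', w x = 0 := by rw [hD]; exact finsum_mem_empty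
    rw [hsumI', hsumI, hinter, this, add_zero] at hle
    have := hpos e he
    linarith
  · have hzI : z ∈ I \ I' := by rw [hD]; exact rfl
    have hzA : z ∉ A := fun h => hzI.2 (hsub (mem_insert_of_mem _ h))
    have hzle : w z ≤ w e := by
      by_contra h
      exact hzA ⟨hzI.1, lt_of_not_ge h⟩
    have hzne : z ≠ e := fun h => heI (h ▸ hzI.1)
    have hzlt : w z < w e :=
      lt_of_le_of_ne hzle (fun h => hzne (hinj (hIG hzI.1) he h))
    have : ∑ᶠ x ∈ I \ I', w x = w z := by rw [hD]; exact finsum_mem_singleton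
    rw [hsumI', hsumI, hinter, this] at hle
    linarith

/-- Let `M` be a matroid whose ground set is partitioned into a set `K` of
elements with known distinct positive weights `w0` and a set `U` of elements
with unknown weights, and let `IK` be the maximum-weight independent set within
`K`. The set of elements of `IK` that can leave the optimal solution under some
assignment of (distinct, positive) weights to the elements of `U` has
cardinality at most `min |U| |IK|`. -/
theorem stmt12 {α : Type*} [Fintype α] (M : Matroid α) (K U : Set α)
    (hE : M.E = K ∪ U) (hdisj : Disjoint K U)
    (w0 : α → ℝ) (hw0pos : ∀ x ∈ K, 0 < w0 x) (hw0inj : Set.InjOn w0 K)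
    (IK : Set α) (hIK : IK ⊆ K) (hIKindep : M.Indep IK)
    (hIKmax : ∀ J ⊆ K, M.Indep J → ∑ᶠ x ∈ J, w0 x ≤ ∑ᶠ x ∈ IK, w0 x) :
    ({x ∈ IK | ∃ w : α → ℝ,
        (∀ y ∈ K, w y = w0 y) ∧ (∀ y ∈ M.E, 0 < w y) ∧ Set.InjOn w M.E ∧
        ∀ I : Set α, (I ⊆ M.E ∧ M.Indep I ∧
            ∀ J : Set α, M.Indep J → ∑ᶠ y ∈ J, w y ≤ ∑ᶠ y ∈ I, w y) →
          x ∉ I} : Set α).ncard ≤ min U.ncard IK.ncard := by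
  classical
  have hKE : K ⊆ M.E := hE ▸ subset_union_left
  have hUE : U ⊆ M.E := hE ▸ subset_union_right
  -- construct the weight function `wstar` giving `U` huge distinct weights
  set eqv := Fintype.equivFin α with heqv
  set n := Fintype.card α with hn
  set C : ℝ := 1 + ∑ x : α, |w0 x| with hC
  have hC1 : (1 : ℝ) ≤ C := by
    have h0 : (0:ℝ) ≤ ∑ x : α, |w0 x| := Finset.sum_nonneg fun i _ => abs_nonneg _
    rw [hC]; linarith
  have hw0ltC : ∀ x : α, w0 x < C := by
    intro x
    have h1 : w0 x ≤ |w0 x| := le_abs_self _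
    have h2 : |w0 x| ≤ ∑ y : α, |w0 y| :=
      Finset.single_le_sum (fun i _ => abs_nonneg (w0 i)) (Finset.mem_univ x)
    rw [hC]; linarith
  set g : α → ℝ := fun y => ((eqv y : ℕ) : ℝ) / (n + 1) with hg
  have hg0 : ∀ y, 0 ≤ g y := fun y => by positivity
  have hg1 : ∀ y, g y < 1 := by
    intro y
    show ((eqv y : ℕ) : ℝ) / (n + 1) < 1
    rw [div_lt_one (by positivity)]
    have h1 : (eqv y : ℕ) < n + 1 := Nat.lt_succ_of_lt (eqv y).2
    exact_mod_cast h1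
  have hginj : Function.Injective g := by
    intro a b hab
    have hab' : ((eqv a : ℕ) : ℝ) / (n + 1) = ((eqv b : ℕ) : ℝ) / (n + 1) := hab
    have hne : ((n : ℝ) + 1) ≠ 0 := by positivity
    have h2 : (eqv a : ℕ) = (eqv b : ℕ) := by
      field_simp at hab'; exact_mod_cast hab'
    exact eqv.injective (Fin.ext h2)
  set wstar : α → ℝ := fun y => if y ∈ K then w0 y else C + g y with hws
  have hwsK : ∀ y ∈ K, wstar y = w0 y := fun y hy => if_pos hy
  have hwsltC : ∀ y ∈ K, wstar y < C := fun y hy => by rw [hwsK y hy]; exact hw0ltC y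
  have hwsgeC : ∀ y, y ∉ K → C ≤ wstar y := by
    intro y hy
    rw [hws]; simp only [if_neg hy]
    have := hg0 y; linarith
  have hwspos : ∀ y : α, 0 < wstar y := by
    intro y
    by_cases hy : y ∈ K
    · rw [hwsK y hy]; exact hw0pos y hy
    · have := hwsgeC y hy; linarith
  have hwsinj : Set.InjOn wstar M.E := by
    intro a ha b hb hab
    by_cases haK : a ∈ K <;> by_cases hbK : b ∈ K
    · exact hw0inj haK hbK (by rwa [hwsK a haK, hwsK b hbK] at hab)
    · exact absurd hab (ne_of_lt (lt_of_lt_of_le (hwsltC a haK) (hwsgeC b hbK)))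
    · exact absurd hab.symm (ne_of_lt (lt_of_lt_of_le (hwsltC b hbK) (hwsgeC a haK)))
    · rw [hws] at hab
      simp only [if_neg haK, if_neg hbK] at hab
      exact hginj (by linarith)
  -- existence of a maximum-weight independent set for any weight function
  have hexmax : ∀ w : α → ℝ, ∃ B, M.Indep B ∧
      ∀ J, M.Indep J → ∑ᶠ x ∈ J, w x ≤ ∑ᶠ x ∈ B, w x := by
    intro w
    obtain ⟨B, hB, hmax⟩ := Set.exists_max_image {I : Set α | M.Indep I}
      (fun I => ∑ᶠ x ∈ I, w x) (Set.toFinite _) ⟨∅, M.empty_indep⟩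
    exact ⟨B, hB, fun J hJ => hmax J hJ⟩
  obtain ⟨B, hBind, hBmax⟩ := hexmax wstar
  have hBE : B ⊆ M.E := hBind.subset_ground
  have hBmax' : ∀ J ⊆ M.E, M.Indep J → ∑ᶠ x ∈ J, wstar x ≤ ∑ᶠ x ∈ B, wstar x :=
    fun J _ hJ => hBmax J hJ
  -- (a) : B ∩ K ⊆ IK
  have haBK : B ∩ K ⊆ IK := by
    rintro k ⟨hkB, hkK⟩
    by_contra hkIK
    have h1 : k ∈ M.closure {y ∈ IK | w0 k < w0 y} :=
      span_heavier M K hKE w0 hw0pos hw0inj IK hIK hIKindep hIKmax k hkK hkIK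
    set B' : Set α := {y ∈ B | wstar k < wstar y} with hB'
    have hB'E : B' ⊆ M.E := (sep_subset _ _).trans hBE
    have hsub2 : {y ∈ IK | w0 k < w0 y} ⊆ M.closure B' := by
      rintro y ⟨hyIK, hy⟩
      have hyK : y ∈ K := hIK hyIK
      have hwy : wstar y = w0 y := hwsK y hyK
      by_cases hyB : y ∈ B
      · exact M.subset_closure B' hB'E ⟨hyB, by rw [hwsK k hkK, hwy]; exact hy⟩
      · have h2 := span_heavier M M.E Subset.rfl wstar (fun x _ => hwspos x) hwsinj
          B hBE hBind hBmax' y (hKE hyK) hyB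
        refine M.closure_subset_closure ?_ h2
        rintro z ⟨hzB, hz⟩
        exact ⟨hzB, by rw [hwsK k hkK]; rw [hwy] at hz; linarith⟩
    have h3 : k ∈ M.closure B' := M.closure_subset_closure_of_subset_closure hsub2 h1
    have hB'sub : B' ⊆ B \ {k} := by
      rintro z ⟨hzB, hz⟩
      exact ⟨hzB, fun h => absurd hz (by rw [mem_singleton_iff] at h; rw [h]; exact lt_irrefl _)⟩
    exact hBind.notMem_closure_sdiff_of_mem hkB (M.closure_subset_closure hB'sub h3)
  -- (b) : the "can leave" set is contained in IK \ B
  have hKB : {x ∈ IK | ∃ w : α → ℝ,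
        (∀ y ∈ K, w y = w0 y) ∧ (∀ y ∈ M.E, 0 < w y) ∧ Set.InjOn w M.E ∧
        ∀ I : Set α, (I ⊆ M.E ∧ M.Indep I ∧
            ∀ J : Set α, M.Indep J → ∑ᶠ y ∈ J, w y ≤ ∑ᶠ y ∈ I, w y) →
          x ∉ I} ⊆ IK \ B := by
    rintro x ⟨hxIK, w, hwK, hwpos, hwinj, hopt⟩
    refine ⟨hxIK, fun hxB => ?_⟩
    obtain ⟨B', hB'ind, hB'max⟩ := hexmax w
    have hxB' : x ∉ B' := hopt B' ⟨hB'ind.subset_ground, hB'ind, hB'max⟩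
    have hxK : x ∈ K := hIK hxIK
    have h1 : x ∈ M.closure {y ∈ B' | w x < w y} :=
      span_heavier M M.E Subset.rfl w hwpos hwinj B' hB'ind.subset_ground hB'ind
        (fun J _ hJ => hB'max J hJ) x (hKE hxK) hxB'
    have hwx : w x = w0 x := hwK x hxK
    have hsub : {y ∈ B' | w x < w y} ⊆ M.closure (B \ {x}) := by
      rintro y ⟨hyB', hy⟩
      have hyE : y ∈ M.E := hB'ind.subset_ground hyB'
      have hBxE : B \ {x} ⊆ M.E := diff_subset.trans hBE
      have hyE' : y ∈ K ∪ U := hE ▸ hyE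
      rcases hyE' with hyK | hyU
      · -- y ∈ K
        have hwy : w y = w0 y := hwK y hyK
        have hxy : w0 x < w0 y := by rw [← hwx, ← hwy]; exact hy
        by_cases hyB : y ∈ B
        · refine M.subset_closure _ hBxE ⟨hyB, fun h => ?_⟩
          rw [mem_singleton_iff] at h
          exact absurd hxy (by rw [h]; exact lt_irrefl _)
        · have h2 := span_heavier M M.E Subset.rfl wstar (fun z _ => hwspos z) hwsinj
            B hBE hBind hBmax' y (hKE hyK) hyB
          refine M.closure_subset_closure ?_ h2
          rintro z ⟨hzB, hz⟩
          refine ⟨hzB, fun h => ?_⟩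
          rw [mem_singleton_iff] at h
          subst h
          rw [hwsK z hxK, hwsK y hyK] at hz
          linarith
      · -- y ∈ U
        by_cases hyB : y ∈ B
        · refine M.subset_closure _ hBxE ⟨hyB, fun h => ?_⟩
          rw [mem_singleton_iff] at h
          exact hdisj.ne_of_mem hxK hyU h.symm
        · have h2 := span_heavier M M.E Subset.rfl wstar (fun z _ => hwspos z) hwsinj
            B hBE hBind hBmax' y hyE hyB
          refine M.closure_subset_closure ?_ h2
          rintro z ⟨hzB, hz⟩
          refine ⟨hzB, fun h => ?_⟩
          rw [mem_singleton_iff] at h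
          subst h
          have h3 : C ≤ wstar y := hwsgeC y (fun hyK => hdisj.ne_of_mem hyK hyU rfl)
          have h4 : wstar z < C := hwsltC z hxK
          linarith
    have h3 : x ∈ M.closure (B \ {x}) := M.closure_subset_closure_of_subset_closure hsub h1
    exact hBind.notMem_closure_sdiff_of_mem hxB h3
  -- counting : |IK| ≤ |B|
  have hcard : IK.ncard ≤ B.ncard := by
    by_contra h
    push_neg at h
    have hlt : B.encard < IK.encard := by
      rw [(Set.toFinite B).encard_eq_coe, (Set.toFinite IK).encard_eq_coe]
      exact_mod_cast h
    obtain ⟨e, he, hins⟩ := hBind.augment hIKindep hlt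
    have hsum : ∑ᶠ x ∈ insert e B, wstar x = wstar e + ∑ᶠ x ∈ B, wstar x :=
      finsum_mem_insert wstar he.2 (Set.toFinite _)
    have := hBmax (insert e B) hins
    rw [hsum] at this
    have := hwspos e
    linarith
  -- |IK \ B| ≤ |U|
  have hIKB : IK ∩ B = B ∩ K := by
    apply Subset.antisymm
    · rintro z ⟨hz1, hz2⟩; exact ⟨hz2, hIK hz1⟩
    · rintro z hz; exact ⟨haBK hz, hz.1⟩
  have hBsplit : B.ncard = (B ∩ K).ncard + (B ∩ U).ncard := by
    have hBeq : B = (B ∩ K) ∪ (B ∩ U) := by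
      rw [← Set.inter_union_distrib_left, ← hE]
      exact (Set.inter_eq_left.mpr hBE).symm
    nth_rewrite 1 [hBeq]
    exact Set.ncard_union_eq
      (Set.disjoint_of_subset inter_subset_right inter_subset_right hdisj)
      (Set.toFinite _) (Set.toFinite _)
  have hIKsplit : IK.ncard = (IK \ B).ncard + (IK ∩ B).ncard := by
    conv_lhs => rw [← Set.inter_union_diff IK B]
    rw [Set.ncard_union_eq (disjoint_sdiff_right.mono_left inter_subset_right)
      (Set.toFinite _) (Set.toFinite _), add_comm]
  have hdiffU : (IK \ B).ncard ≤ U.ncard := by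
    have h1 : (IK \ B).ncard + (B ∩ K).ncard ≤ B.ncard := by
      rw [← hIKB, ← hIKsplit]; exact hcard
    have h2 : (B ∩ U).ncard ≤ U.ncard := Set.ncard_le_ncard inter_subset_right (Set.toFinite _)
    omega
  refine le_min ?_ ?_
  · exact le_trans (Set.ncard_le_ncard hKB (Set.toFinite _)) hdiffU
  · exact Set.ncard_le_ncard (fun x hx => hx.1) (Set.toFinite _)
end

section
/- For integers 1 ≤ r ≤ n/2, the sum n·Σ_{i=1}^{r-1} 1/(n−i) + r·Σ_{i=r}^{n-r} 1/(n−i) is at most (r−1)²/(n−r+1) + r·(1 + ln(n/r − 1)), and for r = n/2 this upper bound is strictly less than n. -/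
lemma harm_aux (a m : ℕ) (ha : 1 ≤ a) :
    ∑ k ∈ Finset.range m, (1:ℝ) / (a + 1 + k) ≤
      Real.log ((a:ℝ) + m) - Real.log a := by
  have haR : (1:ℝ) ≤ (a:ℝ) := by exact_mod_cast ha
  have key : ∀ k ∈ Finset.range m, (1:ℝ) / (a + 1 + k) ≤
      Real.log ((a:ℝ) + (k + 1)) - Real.log ((a:ℝ) + k) := by
    intro k _
    have hk : (0:ℝ) ≤ (k:ℝ) := Nat.cast_nonneg k
    have hb : (0:ℝ) < (a:ℝ) + k := by linarith
    have h := Real.log_le_sub_one_of_pos (x := ((a:ℝ) + k) / ((a:ℝ) + k + 1))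
      (by positivity)
    rw [Real.log_div (by linarith) (by linarith)] at h
    have he : ((a:ℝ) + k) / ((a:ℝ) + k + 1) - 1 = -(1 / ((a:ℝ) + k + 1)) := by
      field_simp; ring
    rw [he] at h
    have e1 : (a:ℝ) + 1 + k = (a:ℝ) + k + 1 := by ring
    have e2 : (a:ℝ) + ((k:ℝ) + 1) = (a:ℝ) + k + 1 := by ring
    rw [e1, e2]
    linarith
  calc ∑ k ∈ Finset.range m, (1:ℝ) / (a + 1 + k)
      ≤ ∑ k ∈ Finset.range m,
        (Real.log ((a:ℝ) + (k + 1)) - Real.log ((a:ℝ) + k)) :=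
        Finset.sum_le_sum key
    _ = Real.log ((a:ℝ) + m) - Real.log ((a:ℝ) + 0) := by
        have := Finset.sum_range_sub (fun k : ℕ => Real.log ((a:ℝ) + k)) m
        simpa using this
    _ = Real.log ((a:ℝ) + m) - Real.log a := by norm_num

/-- For integers `1 ≤ r ≤ n/2`:
`n·Σ_{i=1}^{r-1} 1/(n−i) + r·Σ_{i=r}^{n-r} 1/(n−i)
  ≤ (r−1)²/(n−r+1) + r(1 + ln(n/r − 1))`,
and for `r = n/2` this upper bound is strictly less than `n`. -/
theorem stmt14 (n r : ℕ) (h1 : 1 ≤ r) (h2 : 2 * r ≤ n) :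
    ((n : ℝ) * ∑ i ∈ Finset.Icc 1 (r - 1), 1 / ((n : ℝ) - i)
        + r * ∑ i ∈ Finset.Icc r (n - r), 1 / ((n : ℝ) - i)
      ≤ ((r : ℝ) - 1) ^ 2 / ((n : ℝ) - r + 1)
        + r * (1 + Real.log ((n : ℝ) / r - 1)))
    ∧ (2 * r = n →
        ((r : ℝ) - 1) ^ 2 / ((n : ℝ) - r + 1)
            + r * (1 + Real.log ((n : ℝ) / r - 1)) < n) := by
  have hrR : (1:ℝ) ≤ (r:ℝ) := by exact_mod_cast h1
  have hnr : (2:ℝ) * r ≤ (n:ℝ) := by exact_mod_cast h2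
  have hrpos : (0:ℝ) < (r:ℝ) := by linarith
  constructor
  · -- main inequality
    have hden : (0:ℝ) < (n:ℝ) - r + 1 := by linarith
    -- first sum bound
    have sum1 : (n : ℝ) * ∑ i ∈ Finset.Icc 1 (r - 1), 1 / ((n : ℝ) - i)
        ≤ ((r:ℝ) - 1) + ((r:ℝ) - 1) ^ 2 / ((n:ℝ) - r + 1) := by
      rw [Finset.mul_sum]
      have bound : ∀ i ∈ Finset.Icc 1 (r-1),
          (n:ℝ) * (1 / ((n:ℝ) - i)) ≤ 1 + ((r:ℝ) - 1) / ((n:ℝ) - r + 1) := by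
        intro i hi
        simp only [Finset.mem_Icc] at hi
        have hi1 : (1:ℝ) ≤ (i:ℝ) := by exact_mod_cast hi.1
        have hi2 : (i:ℝ) ≤ (r:ℝ) - 1 := by
          have h := hi.2
          have : (i:ℝ) ≤ ((r - 1 : ℕ):ℝ) := by exact_mod_cast h
          rwa [Nat.cast_sub h1, Nat.cast_one] at this
        have hpos : (0:ℝ) < (n:ℝ) - i := by linarith
        have he : (n:ℝ) * (1 / ((n:ℝ) - i)) = 1 + (i:ℝ) / ((n:ℝ) - i) := by
          field_simp; ring
        rw [he]
        have hdiv : (i:ℝ) / ((n:ℝ) - i) ≤ ((r:ℝ) - 1) / ((n:ℝ) - r + 1) := by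
          apply div_le_div₀ (by linarith) hi2 hden (by linarith)
        linarith
      calc ∑ i ∈ Finset.Icc 1 (r-1), (n:ℝ) * (1 / ((n:ℝ) - i))
          ≤ ∑ _i ∈ Finset.Icc 1 (r-1), (1 + ((r:ℝ) - 1) / ((n:ℝ) - r + 1)) :=
            Finset.sum_le_sum bound
        _ = ((r:ℝ) - 1) * (1 + ((r:ℝ) - 1) / ((n:ℝ) - r + 1)) := by
            rw [Finset.sum_const, Nat.card_Icc]
            have : (r - 1 + 1 - 1 : ℕ) = r - 1 := by omega
            rw [this, nsmul_eq_mul, Nat.cast_sub h1, Nat.cast_one]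
        _ = ((r:ℝ) - 1) + ((r:ℝ) - 1) ^ 2 / ((n:ℝ) - r + 1) := by
            field_simp
    -- second sum: reflect
    have reflect : ∑ i ∈ Finset.Icc r (n - r), 1 / ((n : ℝ) - i)
        = ∑ j ∈ Finset.Icc r (n - r), 1 / (j:ℝ) := by
      apply Finset.sum_nbij' (fun i => n - i) (fun j => n - j)
      · intro a ha; simp only [Finset.mem_Icc] at *; omega
      · intro a ha; simp only [Finset.mem_Icc] at *; omega
      · intro a ha; simp only [Finset.mem_Icc] at ha; omega
      · intro a ha; simp only [Finset.mem_Icc] at ha; omega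
      · intro a ha
        simp only [Finset.mem_Icc] at ha
        have han : a ≤ n := by omega
        rw [Nat.cast_sub han]
    -- harmonic bound
    have sum2 : ∑ j ∈ Finset.Icc r (n - r), 1 / (j:ℝ)
        ≤ 1 / r + (Real.log ((n:ℝ) - r) - Real.log r) := by
      have hsplit : Finset.Icc r (n - r) = Finset.Ico r (n - r + 1) := by
        rw [Finset.Ico_add_one_right_eq_Icc]
      rw [hsplit, Finset.sum_eq_sum_Ico_succ_bot (by omega)]
      have hrw : ∑ i ∈ Finset.Ico (r+1) (n - r + 1), 1 / (i:ℝ)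
          = ∑ k ∈ Finset.range (n - 2*r), (1:ℝ) / (r + 1 + k) := by
        rw [Finset.sum_Ico_eq_sum_range]
        have : n - r + 1 - (r + 1) = n - 2*r := by omega
        rw [this]
        apply Finset.sum_congr rfl
        intro k _
        push_cast
        ring_nf
      rw [hrw]
      have := harm_aux r (n - 2*r) h1
      have hcast : ((r:ℝ) + ((n - 2*r : ℕ):ℝ)) = (n:ℝ) - r := by
        rw [Nat.cast_sub h2]; push_cast; ring
      rw [hcast] at this
      linarith
    -- combine
    have hlog : Real.log ((n:ℝ) / r - 1) = Real.log ((n:ℝ) - r) - Real.log r := by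
      have : (n:ℝ) / r - 1 = ((n:ℝ) - r) / r := by field_simp
      rw [this, Real.log_div (by linarith) (by linarith)]
    have h2' : (r:ℝ) * ∑ i ∈ Finset.Icc r (n - r), 1 / ((n : ℝ) - i)
        ≤ 1 + (r:ℝ) * (Real.log ((n:ℝ) - r) - Real.log r) := by
      rw [reflect]
      have := mul_le_mul_of_nonneg_left sum2 (le_of_lt hrpos)
      calc (r:ℝ) * ∑ j ∈ Finset.Icc r (n - r), 1 / (j:ℝ)
          ≤ (r:ℝ) * (1 / r + (Real.log ((n:ℝ) - r) - Real.log r)) := this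
        _ = 1 + (r:ℝ) * (Real.log ((n:ℝ) - r) - Real.log r) := by
            field_simp
      
    rw [hlog]
    have expand : (r:ℝ) * (1 + (Real.log ((n:ℝ) - r) - Real.log r))
        = (r:ℝ) + (r:ℝ) * (Real.log ((n:ℝ) - r) - Real.log r) := by ring
    rw [expand]
    linarith
  · -- r = n/2 case
    intro heq
    have hn : (n:ℝ) = 2 * r := by exact_mod_cast heq.symm
    rw [hn]
    have : (2:ℝ) * r / r - 1 = 1 := by field_simp; norm_num
    rw [this, Real.log_one]
    have hd : (0:ℝ) < 2 * r - r + 1 := by linarith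
    have hlt : ((r:ℝ) - 1) ^ 2 / (2 * (r:ℝ) - r + 1) < r := by
      rw [div_lt_iff₀ hd]; nlinarith
    nlinarith
end
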